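/- Let S, μ ∈ ℝ and Q > 0, and let φ₁, φ₂ : ℝ⁴ → ℝ be smooth. Define a : ℝ⁴ × ℝ → ℝ by a(x, u) = φ₁(x)·cos(Q u) + φ₂(x)·sin(Q u). Assume that for all (x, u) ∈ ℝ⁴ × ℝ: ∂²a/∂t² − Σ_{k=1}^{3} ∂²a/∂(xᵏ)² + ∂²a/∂u² + (S + μ)·a = 0. Then the complex function a_c := φ₁ + i·φ₂ : ℝ⁴ → ℂ satisfies the Klein–Gordon equation ∂²a_c/∂t² − Σ_{k=1}^{3} ∂²a_c/∂(xᵏ)² + M²·a_c = 0, where the real number M² is defined as S + μ − Q². -/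

import Mathlib

/-- Partial derivative of `f` in the direction `v` (as a function). -/
noncomputable def pder {E F : Type*} [NormedAddCommGroup E] [NormedSpace ℝ E]
    [NormedAddCommGroup F] [NormedSpace ℝ F] (v : E) (f : E → F) : E → F :=
  fun x => fderiv ℝ f x v

/-- Coordinate direction `∂/∂xʲ` in `ℝ⁴ × ℝ`. -/
noncomputable def dxu (j : Fin 4) : (Fin 4 → ℝ) × ℝ := (Pi.single j 1, 0)

/-- Direction `∂/∂u` in `ℝ⁴ × ℝ`. -/
noncomputable def du : (Fin 4 → ℝ) × ℝ := (0, 1)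

/-- Coordinate direction `∂/∂xʲ` in `ℝ⁴`. -/
noncomputable def dx (j : Fin 4) : Fin 4 → ℝ := Pi.single j 1

section Aux

open Real ContinuousLinearMap

/-- Smoothness of a directional derivative of a smooth function. -/
lemma pder_smooth {f : (Fin 4 → ℝ) → ℝ} (hf : ContDiff ℝ (⊤ : ℕ∞) f) (v : Fin 4 → ℝ) :
    ContDiff ℝ (⊤ : ℕ∞) (pder v f) := by
  have h := hf.fderiv_right (m := (⊤ : ℕ∞)) (by exact_mod_cast le_top)
  exact (ContinuousLinearMap.apply ℝ ℝ v).contDiff.comp h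

/-- The total derivative of `p ↦ f p.1 cos (Q p.2) + g p.1 sin (Q p.2)`. -/
lemma keyHasFDerivAt (Q : ℝ) {f g : (Fin 4 → ℝ) → ℝ}
    (hf : Differentiable ℝ f) (hg : Differentiable ℝ g) (q : (Fin 4 → ℝ) × ℝ) :
    HasFDerivAt (fun p : (Fin 4 → ℝ) × ℝ => f p.1 * Real.cos (Q * p.2)
        + g p.1 * Real.sin (Q * p.2))
      ((f q.1 • ((-Real.sin (Q * q.2) * Q) • snd ℝ (Fin 4 → ℝ) ℝ)
          + Real.cos (Q * q.2) • ((fderiv ℝ f q.1).comp (fst ℝ (Fin 4 → ℝ) ℝ)))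
        + (g q.1 • ((Real.cos (Q * q.2) * Q) • snd ℝ (Fin 4 → ℝ) ℝ)
          + Real.sin (Q * q.2) • ((fderiv ℝ g q.1).comp (fst ℝ (Fin 4 → ℝ) ℝ)))) q := by
  have h1 : HasFDerivAt (fun p : (Fin 4 → ℝ) × ℝ => f p.1)
      ((fderiv ℝ f q.1).comp (fst ℝ (Fin 4 → ℝ) ℝ)) q :=
    (hf q.1).hasFDerivAt.comp q hasFDerivAt_fst
  have h1' : HasFDerivAt (fun p : (Fin 4 → ℝ) × ℝ => g p.1)
      ((fderiv ℝ g q.1).comp (fst ℝ (Fin 4 → ℝ) ℝ)) q :=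
    (hg q.1).hasFDerivAt.comp q hasFDerivAt_fst
  have hQu : HasDerivAt (fun u : ℝ => Q * u) Q q.2 := by
    simpa using (hasDerivAt_id q.2).const_mul Q
  have hcos : HasDerivAt (fun u : ℝ => Real.cos (Q * u)) (-Real.sin (Q * q.2) * Q) q.2 :=
    (Real.hasDerivAt_cos (Q * q.2)).comp q.2 hQu
  have hsin : HasDerivAt (fun u : ℝ => Real.sin (Q * u)) (Real.cos (Q * q.2) * Q) q.2 :=
    (Real.hasDerivAt_sin (Q * q.2)).comp q.2 hQu
  have hcos' : HasFDerivAt (fun p : (Fin 4 → ℝ) × ℝ => Real.cos (Q * p.2))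
      ((-Real.sin (Q * q.2) * Q) • snd ℝ (Fin 4 → ℝ) ℝ) q :=
    hcos.comp_hasFDerivAt q hasFDerivAt_snd
  have hsin' : HasFDerivAt (fun p : (Fin 4 → ℝ) × ℝ => Real.sin (Q * p.2))
      ((Real.cos (Q * q.2) * Q) • snd ℝ (Fin 4 → ℝ) ℝ) q :=
    hsin.comp_hasFDerivAt q hasFDerivAt_snd
  exact (h1.mul hcos').add (h1'.mul hsin')

/-- Spatial partial derivative of the product ansatz. -/
lemma keyX (Q : ℝ) {f g : (Fin 4 → ℝ) → ℝ}
    (hf : ContDiff ℝ (⊤ : ℕ∞) f) (hg : ContDiff ℝ (⊤ : ℕ∞) g) (j : Fin 4) :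
    pder (dxu j) (fun p : (Fin 4 → ℝ) × ℝ => f p.1 * Real.cos (Q * p.2)
        + g p.1 * Real.sin (Q * p.2))
      = fun p => pder (dx j) f p.1 * Real.cos (Q * p.2)
        + pder (dx j) g p.1 * Real.sin (Q * p.2) := by
  funext q
  have h := keyHasFDerivAt Q (hf.differentiable (by simp)) (hg.differentiable (by simp)) q
  simp only [pder, h.fderiv, dxu, dx]
  simp [mul_comm]

/-- `u`-partial derivative of the product ansatz. -/
lemma keyU (Q : ℝ) {f g : (Fin 4 → ℝ) → ℝ}
    (hf : ContDiff ℝ (⊤ : ℕ∞) f) (hg : ContDiff ℝ (⊤ : ℕ∞) g) :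
    pder du (fun p : (Fin 4 → ℝ) × ℝ => f p.1 * Real.cos (Q * p.2)
        + g p.1 * Real.sin (Q * p.2))
      = fun p => (Q * g p.1) * Real.cos (Q * p.2) + (-(Q * f p.1)) * Real.sin (Q * p.2) := by
  funext q
  have h := keyHasFDerivAt Q (hf.differentiable (by simp)) (hg.differentiable (by simp)) q
  simp only [pder, h.fderiv, du]
  simp
  ring

/-- Directional derivative of the complexified function. -/
lemma pder_complex {f g : (Fin 4 → ℝ) → ℝ}
    (hf : Differentiable ℝ f) (hg : Differentiable ℝ g) (v : Fin 4 → ℝ) :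
    pder v (fun y => (f y : ℂ) + Complex.I * (g y : ℂ))
      = fun y => ((pder v f y : ℝ) : ℂ) + Complex.I * ((pder v g y : ℝ) : ℂ) := by
  funext y
  have h1 : HasFDerivAt (fun y => (f y : ℂ))
      (Complex.ofRealCLM.comp (fderiv ℝ f y)) y :=
    Complex.ofRealCLM.hasFDerivAt.comp y (hf y).hasFDerivAt
  have h2 : HasFDerivAt (fun y => (g y : ℂ))
      (Complex.ofRealCLM.comp (fderiv ℝ g y)) y :=
    Complex.ofRealCLM.hasFDerivAt.comp y (hg y).hasFDerivAt
  have h : HasFDerivAt (fun y => (f y : ℂ) + Complex.I * (g y : ℂ))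
      (Complex.ofRealCLM.comp (fderiv ℝ f y)
        + Complex.I • Complex.ofRealCLM.comp (fderiv ℝ g y)) y :=
    h1.add (h2.const_mul Complex.I)
  simp only [pder, h.fderiv]
  simp [mul_comm]

end Aux

/-- If `a(x,u) = φ₁(x) cos(Qu) + φ₂(x) sin(Qu)` satisfies
`∂²a/∂t² - Σₖ ∂²a/∂(xᵏ)² + ∂²a/∂u² + (S+μ) a = 0`, then `a_c = φ₁ + i φ₂` satisfies
the Klein–Gordon equation `∂²a_c/∂t² - Σₖ ∂²a_c/∂(xᵏ)² + M² a_c = 0` with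
`M² = S + μ - Q²`. -/
theorem stmt7 (S μ Q : ℝ) (hQ : 0 < Q)
    (φ₁ φ₂ : (Fin 4 → ℝ) → ℝ)
    (hφ₁ : ContDiff ℝ (⊤ : ℕ∞) φ₁) (hφ₂ : ContDiff ℝ (⊤ : ℕ∞) φ₂)
    (a : (Fin 4 → ℝ) × ℝ → ℝ)
    (ha : ∀ (x : Fin 4 → ℝ) (u : ℝ),
      a (x, u) = φ₁ x * Real.cos (Q * u) + φ₂ x * Real.sin (Q * u))
    (heq : ∀ q : (Fin 4 → ℝ) × ℝ,
      pder (dxu 0) (pder (dxu 0) a) q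
        - (∑ k : Fin 3, pder (dxu k.succ) (pder (dxu k.succ) a) q)
        + pder du (pder du a) q + (S + μ) * a q = 0) :
    ∀ x : Fin 4 → ℝ,
      pder (dx 0) (pder (dx 0) (fun y => (φ₁ y : ℂ) + Complex.I * (φ₂ y : ℂ))) x
        - (∑ k : Fin 3, pder (dx k.succ)
            (pder (dx k.succ) (fun y => (φ₁ y : ℂ) + Complex.I * (φ₂ y : ℂ))) x)
        + ((S + μ - Q ^ 2 : ℝ) : ℂ) * ((φ₁ x : ℂ) + Complex.I * (φ₂ x : ℂ)) = 0 := by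
  intro x
  -- rewrite a as the explicit ansatz
  have haA : a = fun p : (Fin 4 → ℝ) × ℝ =>
      φ₁ p.1 * Real.cos (Q * p.2) + φ₂ p.1 * Real.sin (Q * p.2) :=
    funext fun q => ha q.1 q.2
  rw [haA] at heq
  -- second derivatives of a
  have hx2nd : ∀ j : Fin 4,
      pder (dxu j) (pder (dxu j) (fun p : (Fin 4 → ℝ) × ℝ =>
        φ₁ p.1 * Real.cos (Q * p.2) + φ₂ p.1 * Real.sin (Q * p.2)))
      = fun p => pder (dx j) (pder (dx j) φ₁) p.1 * Real.cos (Q * p.2)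
          + pder (dx j) (pder (dx j) φ₂) p.1 * Real.sin (Q * p.2) := by
    intro j
    rw [keyX Q hφ₁ hφ₂ j, keyX Q (pder_smooth hφ₁ _) (pder_smooth hφ₂ _) j]
  have hu2nd :
      pder du (pder du (fun p : (Fin 4 → ℝ) × ℝ =>
        φ₁ p.1 * Real.cos (Q * p.2) + φ₂ p.1 * Real.sin (Q * p.2)))
      = fun p => (Q * (-(Q * φ₁ p.1))) * Real.cos (Q * p.2)
          + (-(Q * (Q * φ₂ p.1))) * Real.sin (Q * p.2) := by
    rw [keyU Q hφ₁ hφ₂, keyU Q (contDiff_const.mul hφ₂) ((contDiff_const.mul hφ₁).neg)]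
  -- evaluate the hypothesis at u = 0 and u = π/(2Q)
  have h1 := heq (x, 0)
  have h2 := heq (x, Real.pi / (2 * Q))
  rw [hx2nd, hu2nd] at h1 h2
  simp only [hx2nd, hu2nd] at h1 h2
  have hQpi : Q * (Real.pi / (2 * Q)) = Real.pi / 2 := by
    field_simp
  simp only [mul_zero, Real.cos_zero, Real.sin_zero, hQpi, Real.cos_pi_div_two,
    Real.sin_pi_div_two, mul_one, mul_zero, add_zero, zero_add] at h1 h2
  -- h1 is the φ₁ equation, h2 the φ₂ equation
  -- now rewrite the complex derivatives
  have hc1 := pder_complex (hφ₁.differentiable (by simp)) (hφ₂.differentiable (by simp)) (dx 0)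
  rw [hc1, pder_complex ((pder_smooth hφ₁ _).differentiable (by simp))
    ((pder_smooth hφ₂ _).differentiable (by simp)) (dx 0)]
  have hck : ∀ k : Fin 3,
      pder (dx k.succ) (pder (dx k.succ)
        (fun y => (φ₁ y : ℂ) + Complex.I * (φ₂ y : ℂ))) x
      = ((pder (dx k.succ) (pder (dx k.succ) φ₁) x : ℝ) : ℂ)
        + Complex.I * ((pder (dx k.succ) (pder (dx k.succ) φ₂) x : ℝ) : ℂ) := by
    intro k
    rw [pder_complex (hφ₁.differentiable (by simp)) (hφ₂.differentiable (by simp)) (dx k.succ),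
      pder_complex ((pder_smooth hφ₁ _).differentiable (by simp))
        ((pder_smooth hφ₂ _).differentiable (by simp)) (dx k.succ)]
  simp only [hck]
  simp only [Fin.sum_univ_three] at h1 h2 ⊢
  have h1c : ((pder (dx 0) (pder (dx 0) φ₁) x
      - (pder (dx (0:Fin 3).succ) (pder (dx (0:Fin 3).succ) φ₁) x
        + pder (dx (1:Fin 3).succ) (pder (dx (1:Fin 3).succ) φ₁) x
        + pder (dx (2:Fin 3).succ) (pder (dx (2:Fin 3).succ) φ₁) x)
      + Q * -(Q * φ₁ x) + (S + μ) * φ₁ x : ℝ) : ℂ) = 0 := by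
    exact_mod_cast congrArg (fun r : ℝ => (r : ℂ)) h1
  have h2c : ((pder (dx 0) (pder (dx 0) φ₂) x
      - (pder (dx (0:Fin 3).succ) (pder (dx (0:Fin 3).succ) φ₂) x
        + pder (dx (1:Fin 3).succ) (pder (dx (1:Fin 3).succ) φ₂) x
        + pder (dx (2:Fin 3).succ) (pder (dx (2:Fin 3).succ) φ₂) x)
      + -(Q * (Q * φ₂ x)) + (S + μ) * φ₂ x : ℝ) : ℂ) = 0 := by
    exact_mod_cast congrArg (fun r : ℝ => (r : ℂ)) h2
  push_cast at h1c h2c ⊢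
  linear_combination h1c + Complex.I * h2c
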